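/- Let F(c) = ∑_{i=1}^{n} p_i ∑_{t=0}^{N} exp(−ξ(θ − ω_i/ξ)·S_t(c) + B_{i,t}) where S_t(c) = ∑_{k=1}^{t} c_k. If θξ < min_i ω_i, then the back-loaded bang-bang schedule c* (c*_t = c_max for t ≥ N−k+1, c*_{N−k} = C_max − k·c_max, c*_t = 0 otherwise, k = ⌊C_max/c_max⌋) minimizes F over all c with 0 ≤ c_t ≤ c_max and ∑ c_t = C_max. -/

import Mathlib

open Finset Real

/-- Theorem 1, case 2: when `θξ < min ωᵢ`, the back-loaded bang-bang
chemotherapy schedule minimizes the total expected metastatic population. -/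
theorem back_loaded_optimal_of_theta_xi_small
    (n N : ℕ) (hn : 1 ≤ n) (p ω : ℕ → ℝ) (B : ℕ → ℕ → ℝ) (ξ θ cmax Cmax : ℝ)
    (hp : ∀ i, i < n → 0 < p i) (hω : ∀ i, i < n → 0 < ω i)
    (hξ : 0 < ξ) (hθ : 0 < θ)
    (hcmax : 0 < cmax) (hC0 : 0 < Cmax) (hCN : Cmax < N * cmax)
    (hkN : ⌊Cmax / cmax⌋₊ + 1 ≤ N)
    (hcond : ∀ i, i < n → θ * ξ < ω i) :
    ∀ c : ℕ → ℝ,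
      (∀ s, s < N → 0 ≤ c s ∧ c s ≤ cmax) →
      (∑ s ∈ Finset.range N, c s = Cmax) →
      ∑ i ∈ Finset.range n, p i *
          ∑ t ∈ Finset.range (N + 1),
            Real.exp (-(ξ * (θ - ω i / ξ)) *
              (∑ k ∈ Finset.range t,
                (fun s => if N - ⌊Cmax / cmax⌋₊ ≤ s then cmax
                  else if s = N - ⌊Cmax / cmax⌋₊ - 1 then
                    Cmax - ⌊Cmax / cmax⌋₊ * cmax
                  else 0) k) + B i t) ≤
        ∑ i ∈ Finset.range n, p i *
          ∑ t ∈ Finset.range (N + 1),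
            Real.exp (-(ξ * (θ - ω i / ξ)) *
              (∑ k ∈ Finset.range t, c k) + B i t) := by
  intro c hc hsum
  set K := ⌊Cmax / cmax⌋₊ with hKdef
  have hKc : (K : ℝ) * cmax ≤ Cmax := by
    have h1 : (K : ℝ) ≤ Cmax / cmax := Nat.floor_le (le_of_lt (div_pos hC0 hcmax))
    have := mul_le_mul_of_nonneg_right h1 (le_of_lt hcmax)
    rwa [div_mul_cancel₀ _ (ne_of_gt hcmax)] at this
  have hCK : Cmax < ((K : ℝ) + 1) * cmax := by
    have h1 : Cmax / cmax < (K : ℝ) + 1 := Nat.lt_floor_add_one (Cmax / cmax)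
    have := (div_lt_iff₀ hcmax).mp h1
    linarith
  -- closed form for the partial sums of the back-loaded schedule
  have hstar : ∀ t, t ≤ N →
      (∑ k ∈ Finset.range t,
        (fun s => if N - K ≤ s then cmax
          else if s = N - K - 1 then Cmax - (K : ℝ) * cmax
          else 0) k) = max 0 (Cmax - ((N : ℝ) - t) * cmax) := by
    intro t
    induction t with
    | zero =>
        intro _
        simp only [Finset.range_zero, Finset.sum_empty, Nat.cast_zero, sub_zero]
        rw [max_eq_left (by linarith : Cmax - (N : ℝ) * cmax ≤ 0)]
    | succ t ih =>
        intro ht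
        have ht' : t ≤ N := Nat.le_of_succ_le ht
        rw [Finset.sum_range_succ, ih ht']
        by_cases h1 : N - K ≤ t
        · rw [if_pos h1]
          have h2 : (N : ℝ) - t ≤ K := by
            have h3 : N ≤ t + K := by omega
            have : (N:ℝ) ≤ ((t + K : ℕ) : ℝ) := Nat.cast_le.mpr h3
            push_cast at this
            linarith
          have h3 : 0 ≤ Cmax - ((N : ℝ) - t) * cmax := by nlinarith
          have h4 : 0 ≤ Cmax - ((N : ℝ) - (t + 1 : ℕ)) * cmax := by
            push_cast; nlinarith
          rw [max_eq_right h3, max_eq_right h4]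
          push_cast
          ring
        · rw [if_neg h1]
          by_cases h2 : t = N - K - 1
          · rw [if_pos h2]
            have hNt : (N : ℝ) - t = (K : ℝ) + 1 := by
              have h3 : t + K + 1 = N := by omega
              have := congrArg (Nat.cast : ℕ → ℝ) h3
              push_cast at this
              linarith
            have hNt1 : (N : ℝ) - (t + 1 : ℕ) = (K : ℝ) := by
              push_cast; linarith
            rw [hNt, hNt1]
            rw [max_eq_left (by linarith : Cmax - ((K : ℝ) + 1) * cmax ≤ 0)]
            rw [max_eq_right (by linarith : (0 : ℝ) ≤ Cmax - (K : ℝ) * cmax)]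
            ring
          · rw [if_neg h2]
            have h5 : (K : ℝ) + 1 ≤ (N : ℝ) - (t + 1 : ℕ) := by
              have h6 : t + 1 + (K + 1) ≤ N := by omega
              have : ((t + 1 + (K + 1) : ℕ) : ℝ) ≤ (N:ℝ) := Nat.cast_le.mpr h6
              push_cast at this ⊢
              linarith
            have h6 : Cmax - ((N : ℝ) - (t + 1 : ℕ)) * cmax ≤ 0 := by nlinarith
            have h7 : Cmax - ((N : ℝ) - t) * cmax ≤ 0 := by
              push_cast at h5; nlinarith
            rw [max_eq_left h6, max_eq_left h7]
            ring
  -- lower bound for the partial sums of any admissible schedule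
  have hlow : ∀ t, t ≤ N →
      max 0 (Cmax - ((N : ℝ) - t) * cmax) ≤ ∑ k ∈ Finset.range t, c k := by
    intro t ht
    apply max_le
    · exact Finset.sum_nonneg fun k hk =>
        (hc k (lt_of_lt_of_le (Finset.mem_range.mp hk) ht)).1
    · have hsplit : (∑ k ∈ Finset.range t, c k) + (∑ k ∈ Finset.Ico t N, c k)
          = Cmax := by
        rw [← hsum, Finset.range_eq_Ico]
        rw [Finset.range_eq_Ico]
        exact Finset.sum_Ico_consecutive c (Nat.zero_le t) ht
      have htail : (∑ k ∈ Finset.Ico t N, c k) ≤ ((N : ℝ) - t) * cmax := by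
        calc (∑ k ∈ Finset.Ico t N, c k) ≤ ∑ k ∈ Finset.Ico t N, cmax :=
              Finset.sum_le_sum fun k hk =>
                (hc k (Finset.mem_Ico.mp hk).2).2
          _ = ((N - t : ℕ) : ℝ) * cmax := by
              rw [Finset.sum_const, Nat.card_Ico, nsmul_eq_mul]
          _ = ((N : ℝ) - t) * cmax := by
              rw [Nat.cast_sub ht]
      linarith
  have hS : ∀ t, t ≤ N →
      (∑ k ∈ Finset.range t,
        (fun s => if N - K ≤ s then cmax
          else if s = N - K - 1 then Cmax - (K : ℝ) * cmax
          else 0) k) ≤ ∑ k ∈ Finset.range t, c k := by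
    intro t ht
    rw [hstar t ht]
    exact hlow t ht
  apply Finset.sum_le_sum
  intro i hi
  have hip := hp i (Finset.mem_range.mp hi)
  apply mul_le_mul_of_nonneg_left _ (le_of_lt hip)
  apply Finset.sum_le_sum
  intro t ht
  have ht' : t ≤ N := Nat.lt_succ_iff.mp (Finset.mem_range.mp ht)
  apply Real.exp_le_exp.mpr
  apply add_le_add_left
  have ha : -(ξ * (θ - ω i / ξ)) = ω i - ξ * θ := by
    field_simp
    ring
  have hapos : 0 ≤ -(ξ * (θ - ω i / ξ)) := by
    rw [ha]
    have := hcond i (Finset.mem_range.mp hi)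
    linarith [this]
  exact mul_le_mul_of_nonneg_left (hS t ht') hapos
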